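/- Let X = {x₁,...,x_n} and let G be the reduced Gröbner basis of a homogeneous ideal in k⟨X⟩ such that lw(G) consists of Lyndon words. Then the set of normal words modulo G equals {u₁u₂⋯u_s : u₁ ≤_plex u₂ ≤_plex ⋯ ≤_plex u_s, each u_i ∈ 𝔏(G), s ≥ 1} ∪ {1}, where 𝔏(G) is the set of Lyndon words normal modulo G. -/

import Mathlib

namespace NC

/-- The free associative algebra on the alphabet `X`, with the words (the free
monoid on `X`) as a basis. -/
abbrev FA (k X : Type) [Field k] := MonoidAlgebra k (FreeMonoid X)

variable {k X : Type} [Field k]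

/-- The monomial on a word `u` (with coefficient `1`). -/
noncomputable def mono (k : Type) [Field k] {X : Type} (u : FreeMonoid X) : FA k X :=
  MonoidAlgebra.of k (FreeMonoid X) u

/-- `u` is a factor of `v`. -/
def IsFactor (u v : FreeMonoid X) : Prop := ∃ w₁ w₂ : FreeMonoid X, w₁ * u * w₂ = v

/-- The leading word of a polynomial (junk value `1` for the zero polynomial). -/
noncomputable def lw [LinearOrder (FreeMonoid X)] (f : FA k X) : FreeMonoid X :=
  WithBot.unbotD 1 f.coeff.support.max

/-- The set of leading words of the nonzero members of `G`. -/
def lwSet [LinearOrder (FreeMonoid X)] (G : Set (FA k X)) : Set (FreeMonoid X) :=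
  {u | ∃ f ∈ G, f ≠ 0 ∧ lw f = u}

/-- The normal words modulo `G` : words having no factor among the leading words of `G`. -/
def nw [LinearOrder (FreeMonoid X)] (G : Set (FA k X)) : Set (FreeMonoid X) :=
  {u | ∀ v ∈ lwSet G, ¬ IsFactor v u}

/-- The two-sided ideal (as a `k`-submodule) generated by a set `S`. -/
noncomputable def ideal2 (k : Type) [Field k] {X : Type} (S : Set (FA k X)) : Submodule k (FA k X) :=
  Submodule.span k {x | ∃ a s b, s ∈ S ∧ x = a * s * b}

/-- A `k`-submodule of the free algebra which is a two-sided ideal. -/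
def IsTwoSided (𝔞 : Submodule k (FA k X)) : Prop :=
  ∀ a x : FA k X, x ∈ 𝔞 → a * x ∈ 𝔞 ∧ x * a ∈ 𝔞

/-- `G` is a Gröbner basis of the (two-sided) ideal `𝔞`. -/
def IsGrobner [LinearOrder (FreeMonoid X)] (𝔞 : Submodule k (FA k X))
    (G : Set (FA k X)) : Prop :=
  (∀ g ∈ G, g ∈ 𝔞) ∧ ∀ f ∈ 𝔞, f ≠ 0 → lw f ∉ nw G

/-- `G` is reduced: every member is monic and normal modulo the remaining members. -/
def IsReducedGB [LinearOrder (FreeMonoid X)] (G : Set (FA k X)) : Prop :=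
  ∀ f ∈ G, f.coeff (lw f) = 1 ∧ ∀ u ∈ f.coeff.support, u ∈ nw (G \ {f})

/-- The fixed linear order on words is admissible. -/
def IsAdmissible (X : Type) [LinearOrder (FreeMonoid X)] : Prop :=
  WellFoundedLT (FreeMonoid X) ∧ (∀ u : FreeMonoid X, u ≠ 1 → 1 < u) ∧
    ∀ u v w₁ w₂ : FreeMonoid X, u < v → w₁ * u * w₂ < w₁ * v * w₂

end NC

namespace NC2
open NC
variable {k X : Type} [Field k]

/-- The (multi)degree of a word, for the grading determined by `e` on the letters. -/
def mdeg {σ : Type} [AddCommMonoid σ] (e : X → σ) (w : FreeMonoid X) : σ :=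
  ((FreeMonoid.toList w).map e).sum

/-- `f` is homogeneous of degree `α`. -/
def IsHomog {σ : Type} [AddCommMonoid σ] (e : X → σ) (α : σ) (f : NC.FA k X) : Prop :=
  ∀ u ∈ f.coeff.support, mdeg e u = α

open Classical in
/-- The degree-`α` homogeneous component of `f`. -/
noncomputable def homComp {σ : Type} [AddCommMonoid σ] (e : X → σ) (α : σ) (f : NC.FA k X) :
    NC.FA k X :=
  MonoidAlgebra.ofCoeff (Finsupp.filter (fun u => mdeg e u = α) f.coeff)

/-- A homogeneous (two-sided) ideal. -/
def IsHomogIdeal {σ : Type} [AddCommMonoid σ] (e : X → σ) (𝔞 : Submodule k (NC.FA k X)) : Prop :=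
  NC.IsTwoSided 𝔞 ∧ ∀ f ∈ 𝔞, ∀ α : σ, homComp e α f ∈ 𝔞

/-- Polynomials supported on a given set of words. -/
noncomputable def wsupported (k : Type) [Field k] {X : Type} (S : Set (FreeMonoid X)) :
    Submodule k (NC.FA k X) :=
  MonoidAlgebra.supported k k S

/-- Dimension of the image, in the quotient by `𝔞`, of the span of the words in `S`. -/
noncomputable def hilbS (𝔞 : Submodule k (NC.FA k X)) (S : Set (FreeMonoid X)) : ℕ :=
  Module.finrank k ↥((wsupported k S).map 𝔞.mkQ)

/-- The multigraded Hilbert function of the quotient algebra `k⟨X⟩/𝔞`. -/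
noncomputable def hilb {σ : Type} [AddCommMonoid σ] (e : X → σ) (𝔞 : Submodule k (NC.FA k X))
    (α : σ) : ℕ :=
  hilbS 𝔞 {u | mdeg e u = α}

/-- The monomial ideal on a set of words. -/
noncomputable def monIdeal (k : Type) [Field k] {X : Type} (V : Set (FreeMonoid X)) :
    Submodule k (NC.FA k X) :=
  NC.ideal2 k ((fun u => NC.mono k u) '' V)

/-- Partial sums of a Hilbert function. -/
def psum (H : ℕ → ℕ) (n : ℕ) : ℕ := ∑ i ∈ Finset.range (n + 1), H i

/-- The growth function is bounded by a polynomial of degree `d`. -/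
def PolyBoundedBy (H : ℕ → ℕ) (d : ℕ) : Prop := ∃ C : ℕ, ∀ n, psum H n ≤ C * (n + 1) ^ d

/-- Polynomial growth (of some degree). -/
def PolyGrowth (H : ℕ → ℕ) : Prop := ∃ d, PolyBoundedBy H d

/-- Polynomial growth of degree exactly `d`. -/
def PolyGrowthDeg (H : ℕ → ℕ) (d : ℕ) : Prop :=
  ∃ C : ℕ, 0 < C ∧ ∀ n, psum H n ≤ C * (n + 1) ^ d ∧ (n + 1) ^ d ≤ C * psum H n

/-- Gelfand-Kirillov dimension of a graded algebra with Hilbert function `H`, as an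
extended natural number. -/
noncomputable def gkdimH (H : ℕ → ℕ) : ℕ∞ :=
  sInf ((fun d : ℕ => (d : ℕ∞)) '' {d | PolyBoundedBy H d})

end NC2

namespace NC4
open NC
variable {N : ℕ}

/-- The lexicographic comparison `u >_lex v` on words over the ordered alphabet `Fin N`
(with `x_i > x_j` iff `i > j`). -/
def LexGt (u v : FreeMonoid (Fin N)) : Prop :=
  ∃ (r s t : FreeMonoid (Fin N)) (i j : Fin N), j < i ∧
    u = r * FreeMonoid.of i * s ∧ v = r * FreeMonoid.of j * t

/-- Lyndon words: nonempty words `u` with `u >_lex w*v` for every nontrivial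
factorization `u = v*w`. -/
def IsLyndon (u : FreeMonoid (Fin N)) : Prop :=
  u ≠ 1 ∧ ∀ v w : FreeMonoid (Fin N), v ≠ 1 → w ≠ 1 → u = v * w → LexGt u (w * v)

/-- The plex comparison `u >_plex v`: `u` is a proper prefix of `v`, or `u >_lex v`. -/
def PlexGt (u v : FreeMonoid (Fin N)) : Prop :=
  (∃ w : FreeMonoid (Fin N), w ≠ 1 ∧ v = u * w) ∨ LexGt u v

/-- `u ≤_plex v`. -/
def PlexLe (u v : FreeMonoid (Fin N)) : Prop := u = v ∨ PlexGt v u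

variable {k : Type} [Field k]

/-- `𝔏(G)`: the set of Lyndon words which are normal modulo `G`. -/
def LyndonNormal [LinearOrder (FreeMonoid (Fin N))] (G : Set (NC.FA k (Fin N))) :
    Set (FreeMonoid (Fin N)) :=
  {u | IsLyndon u ∧ u ∈ NC.nw G}

end NC4

namespace CFLaux
variable {α : Type*} [LinearOrder α]

/-- `u` is greater than `v` at the first difference (and a first difference exists). -/
def Fdg : List α → List α → Prop
  | a :: u, b :: v => b < a ∨ (a = b ∧ Fdg u v)
  | _, _ => False

@[simp] theorem fdg_nil_left {v : List α} : ¬ Fdg [] v := by cases v <;> simp [Fdg]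
@[simp] theorem fdg_nil_right {u : List α} : ¬ Fdg u [] := by cases u <;> simp [Fdg]
theorem fdg_cons {a b : α} {u v : List α} :
    Fdg (a :: u) (b :: v) ↔ b < a ∨ (a = b ∧ Fdg u v) := Iff.rfl

theorem fdg_irrefl : ∀ u : List α, ¬ Fdg u u := by
  intro u hu
  induction u with
  | nil => exact fdg_nil_left hu
  | cons a u ih =>
    rcases (fdg_cons).mp hu with h | ⟨_, h⟩
    · exact lt_irrefl a h
    · exact ih h

theorem fdg_asymm : ∀ {u v : List α}, Fdg u v → ¬ Fdg v u := by
  intro u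
  induction u with
  | nil => intro v h; exact absurd h fdg_nil_left
  | cons a u ih =>
    intro v h h'
    cases v with
    | nil => exact fdg_nil_right h
    | cons b v =>
      rcases (fdg_cons).mp h with hab | ⟨hab, h⟩
      · rcases (fdg_cons).mp h' with hba | ⟨hba, _⟩
        · exact absurd hba (not_lt_of_gt hab)
        · exact absurd hab (by simp [hba])
      · rcases (fdg_cons).mp h' with hba | ⟨_, h'⟩
        · exact absurd hba (by simp [hab])
        · exact ih h h'

theorem fdg_trans : ∀ {u v w : List α}, Fdg u v → Fdg v w → Fdg u w := by
  intro u
  induction u with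
  | nil => intro v w h; exact absurd h fdg_nil_left
  | cons a u ih =>
    intro v w h h'
    cases v with
    | nil => exact absurd h fdg_nil_right
    | cons b v =>
      cases w with
      | nil => exact absurd h' fdg_nil_right
      | cons c w =>
        rcases (fdg_cons).mp h with hab | ⟨hab, h⟩ <;>
          rcases (fdg_cons).mp h' with hbc | ⟨hbc, h'⟩
        · exact Or.inl (lt_trans hbc hab)
        · exact Or.inl (hbc ▸ hab)
        · exact Or.inl (hab ▸ hbc)
        · exact Or.inr ⟨hab.trans hbc, ih h h'⟩

theorem fdg_or_prefix : ∀ u v : List α, u <+: v ∨ v <+: u ∨ Fdg u v ∨ Fdg v u := by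
  intro u
  induction u with
  | nil => intro v; exact Or.inl (List.nil_prefix)
  | cons a u ih =>
    intro v
    cases v with
    | nil => exact Or.inr (Or.inl (List.nil_prefix))
    | cons b v =>
      rcases lt_trichotomy a b with h | h | h
      · exact Or.inr (Or.inr (Or.inr (Or.inl h)))
      · rcases ih v with hp | hp | hf | hf
        · exact Or.inl (by subst h; exact List.cons_prefix_cons.mpr ⟨rfl, hp⟩)
        · exact Or.inr (Or.inl (by subst h; exact List.cons_prefix_cons.mpr ⟨rfl, hp⟩))
        · exact Or.inr (Or.inr (Or.inl (Or.inr ⟨h, hf⟩)))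
        · exact Or.inr (Or.inr (Or.inr (Or.inr ⟨h.symm, hf⟩)))
      · exact Or.inr (Or.inr (Or.inl (Or.inl h)))

theorem not_prefix_of_fdg : ∀ {u v : List α}, Fdg u v → ¬ u <+: v := by
  intro u
  induction u with
  | nil => intro v h; exact absurd h fdg_nil_left
  | cons a u ih =>
    intro v h hp
    cases v with
    | nil => exact fdg_nil_right h
    | cons b v =>
      rcases List.cons_prefix_cons.mp hp with ⟨rfl, hp2⟩
      rcases (fdg_cons).mp h with hab | ⟨_, h2⟩
      · exact lt_irrefl _ hab
      · exact ih h2 hp2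

theorem not_prefix_of_fdg' : ∀ {u v : List α}, Fdg u v → ¬ v <+: u := by
  intro u
  induction u with
  | nil => intro v h; exact absurd h fdg_nil_left
  | cons a u ih =>
    intro v h hp
    cases v with
    | nil => exact fdg_nil_right h
    | cons b v =>
      rcases List.cons_prefix_cons.mp hp with ⟨rfl, hp2⟩
      rcases (fdg_cons).mp h with hab | ⟨_, h2⟩
      · exact lt_irrefl _ hab
      · exact ih h2 hp2

theorem fdg_append : ∀ {u v : List α}, Fdg u v → ∀ (x y : List α), Fdg (u ++ x) (v ++ y) := by
  intro u
  induction u with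
  | nil => intro v h; exact absurd h fdg_nil_left
  | cons a u ih =>
    intro v h x y
    cases v with
    | nil => exact absurd h fdg_nil_right
    | cons b v =>
      simp only [List.cons_append, fdg_cons]
      rcases (fdg_cons).mp h with hab | ⟨hab, h⟩
      · exact Or.inl hab
      · exact Or.inr ⟨hab, ih h x y⟩

theorem fdg_append_left : ∀ (w : List α) {u v : List α}, Fdg (w ++ u) (w ++ v) ↔ Fdg u v := by
  intro w
  induction w with
  | nil => intro u v; rfl
  | cons c w ih => intro u v; simpa [fdg_cons] using ih

/-- If `x ++ y` is fd-greater than `v` but `x` is not a prefix of `v`, already `x` beats `v`. -/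
theorem fdg_of_fdg_append_left : ∀ {x : List α} {y v : List α},
    Fdg (x ++ y) v → ¬ x <+: v → Fdg x v := by
  intro x
  induction x with
  | nil => intro y v _ h; exact absurd (List.nil_prefix) h
  | cons a x ih =>
    intro y v h hnp
    cases v with
    | nil => exact absurd h fdg_nil_right
    | cons b v =>
      simp only [List.cons_append, fdg_cons] at h
      rcases h with hab | ⟨hab, h⟩
      · exact Or.inl hab
      · subst hab
        refine Or.inr ⟨rfl, ih h fun hp => hnp (List.cons_prefix_cons.mpr ⟨rfl, hp⟩)⟩

theorem fdg_of_fdg_append_right : ∀ {u x : List α} {y : List α},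
    Fdg u (x ++ y) → ¬ x <+: u → Fdg u x := by
  intro u
  induction u with
  | nil => intro x y h; exact absurd h fdg_nil_left
  | cons a u ih =>
    intro x y h hnp
    cases x with
    | nil => exact absurd (List.nil_prefix) hnp
    | cons b x =>
      simp only [List.cons_append, fdg_cons] at h
      rcases h with hab | ⟨hab, h⟩
      · exact Or.inl hab
      · subst hab
        exact Or.inr ⟨rfl, ih h fun hp => hnp (List.cons_prefix_cons.mpr ⟨rfl, hp⟩)⟩

theorem fdg_eq_or_fdg_of_length : ∀ {v t x y : List α}, Fdg (v ++ x) (t ++ y) →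
    v.length = t.length → v = t ∨ Fdg v t := by
  intro v
  induction v with
  | nil =>
    intro t x y _ hl
    rcases List.length_eq_zero_iff.mp hl.symm with rfl
    exact Or.inl rfl
  | cons a v ih =>
    intro t x y h hl
    cases t with
    | nil => simp at hl
    | cons b t =>
      simp only [List.cons_append, fdg_cons] at h
      rcases h with hab | ⟨hab, h⟩
      · exact Or.inr (Or.inl hab)
      · subst hab
        rcases ih h (by simpa using hl) with rfl | hf
        · exact Or.inl rfl
        · exact Or.inr (Or.inr ⟨rfl, hf⟩)

theorem fdg_iff_exists {u v : List α} : Fdg u v ↔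
    ∃ (r : List α) (a : α) (s : List α) (b : α) (t : List α),
      b < a ∧ u = r ++ a :: s ∧ v = r ++ b :: t := by
  constructor
  · intro h
    induction u generalizing v with
    | nil => exact absurd h fdg_nil_left
    | cons a u ih =>
      cases v with
      | nil => exact absurd h fdg_nil_right
      | cons b v =>
        rcases (fdg_cons).mp h with hab | ⟨hab, h⟩
        · exact ⟨[], a, u, b, v, hab, rfl, rfl⟩
        · obtain ⟨r, a', s, b', t, hlt, hu, hv⟩ := ih h
          exact ⟨a :: r, a', s, b', t, hlt, by rw [hu]; rfl, by rw [hab, hv]; rfl⟩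
  · rintro ⟨r, a, s, b, t, hlt, rfl, rfl⟩
    induction r with
    | nil => exact Or.inl hlt
    | cons c r ih => exact Or.inr ⟨rfl, ih⟩

/-- Lyndon via suffixes: greater at first difference than all proper nonempty suffixes. -/
def Lyn' (u : List α) : Prop :=
  u ≠ [] ∧ ∀ s, s ≠ [] → s ≠ u → s <:+ u → Fdg u s

/-- Lyndon via rotations. -/
def LynR (u : List α) : Prop :=
  u ≠ [] ∧ ∀ v w : List α, v ≠ [] → w ≠ [] → u = v ++ w → Fdg u (w ++ v)

theorem lynR_iff {u : List α} : LynR u ↔ Lyn' u := by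
  constructor
  · rintro ⟨hne, h⟩
    refine ⟨hne, ?_⟩
    intro s hs hsu hsuf
    obtain ⟨v, rfl⟩ := hsuf
    have hv : v ≠ [] := by rintro rfl; exact hsu rfl
    have h1 : Fdg (v ++ s) (s ++ v) := h v s hv hs rfl
    by_cases hp : s <+: v ++ s
    · -- s is a prefix of u, write u = s ++ t
      obtain ⟨t, ht⟩ := hp
      have htne : t ≠ [] := by
        rintro rfl
        simp only [List.append_nil] at ht
        exact hsu ht
      have h2 : Fdg (v ++ s) (t ++ s) := h s t hs htne ht.symm
      -- from h1 : Fdg (s ++ t) (s ++ v) (rewriting), get Fdg t v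
      have h1' : Fdg (s ++ t) (s ++ v) := by rw [ht]; exact h1
      have htv : Fdg t v := (fdg_append_left s).mp h1'
      have hlen : v.length = t.length := by
        have := congrArg List.length ht
        simp only [List.length_append] at this
        omega
      rcases fdg_eq_or_fdg_of_length h2 hlen with rfl | hvt
      · exact absurd htv (fdg_irrefl v)
      · exact absurd htv (fdg_asymm hvt)
    · exact fdg_of_fdg_append_right h1 hp
  · rintro ⟨hne, h⟩
    refine ⟨hne, ?_⟩
    rintro v w hv hw rfl
    have hsw : Fdg (v ++ w) w := by
      refine h w hw ?_ ⟨v, rfl⟩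
      intro hwu
      have hlen := congrArg List.length hwu
      simp only [List.length_append] at hlen
      have : 0 < v.length := List.length_pos_iff.mpr hv
      omega
    have := fdg_append hsw [] v
    simpa using this

theorem lyn'_singleton (a : α) : Lyn' [a] := by
  refine ⟨by simp, ?_⟩
  intro s hs hsu hsuf
  rcases List.suffix_cons_iff.mp hsuf with h | h
  · exact absurd h hsu
  · simp only [List.suffix_nil] at h; exact absurd h hs

theorem lyn'_ne_nil {u : List α} (h : Lyn' u) : u ≠ [] := h.1

/-- Gluing lemma: if `u < v` in the lex order where prefixes are smaller, then `u ++ v`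
is Lyndon. -/
theorem lyn'_glue {u v : List α} (hu : Lyn' u) (hv : Lyn' v)
    (h : (u <+: v ∧ u ≠ v) ∨ Fdg u v) : Lyn' (u ++ v) := by
  have huv_v : Fdg (u ++ v) v := by
    rcases h with ⟨⟨t, ht⟩, hne⟩ | hf
    · have htne : t ≠ [] := by rintro rfl; simp only [List.append_nil] at ht; exact hne ht
      have hft : Fdg v t := by
        refine hv.2 t htne ?_ ⟨u, ht⟩
        intro htv
        have hlen := congrArg List.length ht
        rw [htv] at hlen
        simp only [List.length_append] at hlen
        have : 0 < u.length := List.length_pos_iff.mpr hu.1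
        omega
      have h2 : Fdg (u ++ v) (u ++ t) := (fdg_append_left u).mpr hft
      rwa [ht] at h2
    · have := fdg_append hf v ([] : List α)
      simpa using this
  refine ⟨by simp [hu.1], ?_⟩
  intro s hs hsu hsuf
  -- decompose the suffix of u ++ v
  obtain ⟨p, hp⟩ := hsuf
  rcases List.append_eq_append_iff.mp hp with ⟨a', ha1, ha2⟩ | ⟨c', hc1, hc2⟩
  · -- u = p ++ a', s = a' ++ v with a' a suffix of u
    rcases eq_or_ne a' [] with rfl | ha'ne
    · -- s = v
      simp only [List.nil_append] at ha2
      subst ha2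
      exact huv_v
    · have ha'u : a' ≠ u := by
        rintro rfl
        exact hsu ha2
      have : Fdg u a' := hu.2 a' ha'ne ha'u ⟨p, ha1.symm⟩
      rw [ha2]
      exact fdg_append this v v
  · -- p = u ++ c', v = c' ++ s : s is a suffix of v
    rcases eq_or_ne s v with rfl | hsv
    · exact huv_v
    · have : Fdg v s := hv.2 s hs hsv ⟨c', hc2.symm⟩
      exact fdg_trans huv_v this

/-- The plex (non-strict) order: `Ple u v` iff `u ≤_plex v`, i.e. `v` is a prefix of `u`
or `v` is greater at the first difference. -/
def Ple (u v : List α) : Prop := v <+: u ∨ Fdg v u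

theorem ple_refl (u : List α) : Ple u u := Or.inl (List.prefix_refl u)

theorem ple_trans : ∀ {a b c : List α}, Ple a b → Ple b c → Ple a c := by
  rintro a b c (hba | hba) (hcb | hcb)
  · exact Or.inl (hcb.trans hba)
  · obtain ⟨e, rfl⟩ := hba
    have := fdg_append hcb ([] : List α) e
    exact Or.inr (by simpa using this)
  · obtain ⟨e, rfl⟩ := hcb
    by_cases hca : c <+: a
    · exact Or.inl hca
    · exact Or.inr (fdg_of_fdg_append_left hba hca)
  · exact Or.inr (fdg_trans hcb hba)

theorem lt'_of_not_ple {u v : List α} (h : ¬ Ple u v) :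
    (u <+: v ∧ u ≠ v) ∨ Fdg u v := by
  rcases fdg_or_prefix u v with hp | hp | hf | hf
  · refine Or.inl ⟨hp, ?_⟩
    rintro rfl
    exact h (ple_refl u)
  · exact absurd (Or.inl hp) h
  · exact Or.inr hf
  · exact absurd (Or.inr hf) h

theorem ple_all_of_chain' : ∀ {t : List (List α)} {a v : List α},
    List.Chain' Ple (a :: t) → Ple v a → ∀ w ∈ t, Ple v w := by
  intro t
  induction t with
  | nil => intro a v _ _ w hw; simp at hw
  | cons b t ih =>
    intro a v hc hva w hw
    have hab : Ple a b := (List.isChain_cons_cons.mp hc).1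
    have hvb : Ple v b := ple_trans hva hab
    rcases List.mem_cons.mp hw with rfl | hw
    · exact hvb
    · exact ih (List.isChain_cons_cons.mp hc).2 hvb w hw

/-- Key straddling lemma. -/
theorem claimM : ∀ (t : List (List α)), (∀ w ∈ t, w ≠ []) → ∀ v z : List α, Lyn' v →
    (∀ w ∈ t, Ple v w) → z ≠ [] → z <+: t.flatten → Fdg v z → False := by
  intro t
  induction t with
  | nil =>
    intro _ v z _ _ hz hzp _
    simp only [List.flatten_nil, List.prefix_nil] at hzp
    exact hz hzp
  | cons w1 t ih =>
    intro hne v z hv hple hz hzp hfvz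
    have hw1 : w1 ≠ [] := hne w1 (by simp)
    rcases hple w1 (by simp) with hpw | hfw
    · -- w1 <+: v
      have hzflat : z <+: w1 ++ t.flatten := by simpa using hzp
      have hw1flat : w1 <+: w1 ++ t.flatten := ⟨t.flatten, rfl⟩
      rcases List.prefix_or_prefix_of_prefix hzflat hw1flat with hzw | hwz
      · -- z <+: w1 <+: v contradicts Fdg v z
        exact not_prefix_of_fdg' hfvz (hzw.trans hpw)
      · obtain ⟨z', rfl⟩ := hwz
        rcases eq_or_ne z' [] with rfl | hz'
        · simp only [List.append_nil] at hfvz ⊢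
          exact not_prefix_of_fdg' hfvz hpw
        · obtain ⟨vb, rfl⟩ := hpw
          have hfvbz' : Fdg vb z' := (fdg_append_left w1).mp hfvz
          rcases eq_or_ne vb [] with rfl | hvb
          · exact fdg_nil_left hfvbz'
          · have hfv_vb : Fdg (w1 ++ vb) vb := by
              refine hv.2 vb hvb ?_ ⟨w1, rfl⟩
              intro h
              have hlen := congrArg List.length h
              simp only [List.length_append] at hlen
              have : 0 < w1.length := List.length_pos_iff.mpr hw1
              omega
            have hfvz' : Fdg (w1 ++ vb) z' := fdg_trans hfv_vb hfvbz'
            have hz'flat : z' <+: t.flatten :=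
              (List.prefix_append_right_inj w1).mp hzflat
            exact ih (fun w hw => hne w (by simp [hw])) (w1 ++ vb) z' hv
              (fun w hw => hple w (by simp [hw])) hz' hz'flat hfvz'
    · -- Fdg w1 v
      have hfw1z : Fdg w1 z := fdg_trans hfw hfvz
      have hzflat : z <+: w1 ++ t.flatten := by simpa using hzp
      have hw1flat : w1 <+: w1 ++ t.flatten := ⟨t.flatten, rfl⟩
      rcases List.prefix_or_prefix_of_prefix hzflat hw1flat with hzw | hwz
      · exact not_prefix_of_fdg' hfw1z hzw
      · exact not_prefix_of_fdg hfw1z hwz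

/-- The Lyndon factor lemma: a Lyndon factor of a plex-nondecreasing product of Lyndon
words is a factor of one of the terms. -/
theorem factor_lemma : ∀ (l : List (List α)), List.Chain' Ple l → (∀ u ∈ l, Lyn' u) →
    ∀ v p q : List α, Lyn' v → l.flatten = p ++ v ++ q →
    ∃ u ∈ l, ∃ p' q' : List α, u = p' ++ v ++ q' := by
  intro l
  induction l with
  | nil =>
    intro _ _ v p q hv hj
    exfalso
    have : v = [] := by
      have := hj.symm
      simp only [List.flatten_nil] at this
      rcases List.append_eq_nil_iff.mp this with ⟨h1, _⟩
      exact (List.append_eq_nil_iff.mp h1).2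
    exact hv.1 this
  | cons u1 t ih =>
    intro hchain hlyn v p q hv hj
    simp only [List.flatten_cons] at hj
    have hu1 : Lyn' u1 := hlyn u1 (by simp)
    by_cases h1 : p.length + v.length ≤ u1.length
    · -- v is inside u1
      have hpv : p ++ v <+: u1 ++ t.flatten := ⟨q, hj.symm⟩
      have hu1p : u1 <+: u1 ++ t.flatten := ⟨t.flatten, rfl⟩
      have : p ++ v <+: u1 :=
        List.prefix_of_prefix_length_le hpv hu1p (by simpa using h1)
      obtain ⟨q', hq'⟩ := this
      exact ⟨u1, by simp, p, q', hq'.symm⟩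
    · by_cases h2 : u1.length ≤ p.length
      · -- v is inside the tail
        have hpp : p <+: u1 ++ t.flatten := ⟨v ++ q, by rw [← List.append_assoc]; exact hj.symm⟩
        have hu1p : u1 <+: u1 ++ t.flatten := ⟨t.flatten, rfl⟩
        have : u1 <+: p := List.prefix_of_prefix_length_le hu1p hpp h2
        obtain ⟨p', rfl⟩ := this
        have hjt : t.flatten = p' ++ v ++ q := by
          have : u1 ++ t.flatten = u1 ++ (p' ++ v ++ q) := by
            rw [hj]; simp [List.append_assoc]
          exact List.append_cancel_left this
        obtain ⟨u, hu, hw⟩ := ih hchain.tail (fun u hu => hlyn u (by simp [hu])) v p' q hv hjt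
        exact ⟨u, by simp [hu], hw⟩
      · -- straddle
        push_neg at h1 h2
        exfalso
        have hpp : p <+: u1 ++ t.flatten := ⟨v ++ q, by rw [← List.append_assoc]; exact hj.symm⟩
        have hu1p : u1 <+: u1 ++ t.flatten := ⟨t.flatten, rfl⟩
        have hpu1 : p <+: u1 := List.prefix_of_prefix_length_le hpp hu1p (le_of_lt h2)
        obtain ⟨s1, rfl⟩ := hpu1
        have hs1 : s1 ≠ [] := by
          rintro rfl; simp at h2
        have hvq : v ++ q = s1 ++ t.flatten := by
          have : p ++ (v ++ q) = p ++ (s1 ++ t.flatten) := by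
            rw [← List.append_assoc, ← hj]; simp [List.append_assoc]
          exact List.append_cancel_left this
        have hs1v : s1 <+: v := by
          refine List.prefix_of_prefix_length_le ⟨t.flatten, hvq.symm⟩ ⟨q, rfl⟩ ?_
          simp only [List.length_append] at h1
          omega
        obtain ⟨z, rfl⟩ := hs1v
        have hzne : z ≠ [] := by
          rintro rfl
          simp only [List.append_nil, List.length_append] at h1
          omega
        have hzflat : z <+: t.flatten := by
          have : s1 ++ (z ++ q) = s1 ++ t.flatten := by
            rw [← List.append_assoc]; exact hvq
          exact ⟨q, List.append_cancel_left this⟩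
        have hplev : Ple (s1 ++ z) (p ++ s1) := by
          rcases eq_or_ne p [] with rfl | hpne
          · simp only [List.nil_append]
            exact Or.inl ⟨z, rfl⟩
          · have hs1u1 : s1 ≠ p ++ s1 := by
              intro h
              have hlen := congrArg List.length h
              simp only [List.length_append] at hlen
              have : 0 < p.length := List.length_pos_iff.mpr hpne
              omega
            have hfs : Fdg (p ++ s1) s1 := hu1.2 s1 hs1 hs1u1 ⟨p, rfl⟩
            have := fdg_append hfs ([] : List α) z
            simp only [List.append_nil] at this
            exact Or.inr this
        have hfvz : Fdg (s1 ++ z) z := by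
          refine hv.2 z hzne ?_ ⟨s1, rfl⟩
          intro h
          have hlen := congrArg List.length h
          simp only [List.length_append] at hlen
          have : 0 < s1.length := List.length_pos_iff.mpr hs1
          omega
        exact claimM t (fun w hw => (hlyn w (by simp [hw])).1) (s1 ++ z) z hv
          (ple_all_of_chain' hchain hplev) hzne hzflat hfvz

/-- Existence of the Chen–Fox–Lyndon factorization. -/
theorem cfl_exists_aux : ∀ (n : ℕ) (w : List α), w.length ≤ n → w ≠ [] →
    ∃ l : List (List α), l ≠ [] ∧ (∀ u ∈ l, Lyn' u) ∧ List.Chain' Ple l ∧ l.flatten = w := by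
  intro n
  induction n with
  | zero =>
    intro w hw hne
    exact absurd (List.length_eq_zero_iff.mp (Nat.le_zero.mp hw)) hne
  | succ n ih =>
    intro w hw hne
    classical
    set P : ℕ → Prop := fun m => 1 ≤ m ∧ Lyn' (w.take m) with hP
    have hP1 : P 1 := by
      refine ⟨le_refl 1, ?_⟩
      rcases w with _ | ⟨a, w⟩
      · exact absurd rfl hne
      · simpa using lyn'_singleton a
    have h1len : 1 ≤ w.length := by
      rcases w with _ | _
      · exact absurd rfl hne
      · simp
    set k := Nat.findGreatest P w.length with hk
    have hkP : P k := Nat.findGreatest_spec h1len hP1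
    have hk1 : 1 ≤ k := Nat.le_findGreatest h1len hP1
    have hkle : k ≤ w.length := Nat.findGreatest_le w.length
    rcases eq_or_lt_of_le hkle with hkeq | hklt
    · refine ⟨[w], by simp, ?_, List.isChain_singleton _, by simp⟩
      intro u hu
      simp only [List.mem_singleton] at hu
      subst hu
      have := hkP.2
      rwa [hkeq, List.take_length] at this
    · set u := w.take k with hu
      set w' := w.drop k with hw'
      have hw'ne : w' ≠ [] := by
        rw [hw']
        intro h
        have := congrArg List.length h
        simp only [List.length_drop, List.length_nil] at this
        omega
      have hw'len : w'.length ≤ n := by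
        rw [hw']
        simp only [List.length_drop]
        omega
      obtain ⟨l', hl'ne, hl'lyn, hl'chain, hl'join⟩ := ih w' hw'len hw'ne
      rcases l' with _ | ⟨u2, l''⟩
      · exact absurd rfl hl'ne
      · have hu2w' : u2 <+: w' := by
          rw [← hl'join]
          exact ⟨l''.flatten, by simp⟩
        have hu2lyn : Lyn' u2 := hl'lyn u2 (by simp)
        have hu2ne : u2 ≠ [] := hu2lyn.1
        have hple : Ple u u2 := by
          by_contra hnp
          have hglue : Lyn' (u ++ u2) := lyn'_glue hkP.2 hu2lyn (lt'_of_not_ple hnp)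
          -- u ++ u2 = take (k + u2.length) w
          have hulen : u.length = k := by
            rw [hu]; simp only [List.length_take]; omega
          have htake : w.take (k + u2.length) = u ++ u2 := by
            conv_lhs => rw [← List.take_append_drop k w]
            rw [List.take_append]
            have h1 : (w.take k).length = k := hulen
            rw [List.take_of_length_le (by rw [h1]; omega), h1]
            congr 1
            · have : k + u2.length - k = u2.length := by omega
              rw [this, ← hw']
              exact (List.prefix_iff_eq_take.mp hu2w').symm
          have hmle : k + u2.length ≤ w.length := by
            have : u2.length ≤ w'.length := hu2w'.length_le
            rw [hw', List.length_drop] at this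
            omega
          have : ¬ P (k + u2.length) := by
            apply Nat.findGreatest_is_greatest _ hmle
            have : 1 ≤ u2.length := by
              rcases u2 with _ | _
              · exact absurd rfl hu2ne
              · simp
            omega
          apply this
          refine ⟨by omega, ?_⟩
          rw [htake]
          exact hglue
        refine ⟨u :: u2 :: l'', by simp, ?_, ?_, ?_⟩
        · intro x hx
          rcases List.mem_cons.mp hx with rfl | hx
          · exact hkP.2
          · exact hl'lyn x hx
        · exact List.isChain_cons_cons.mpr ⟨hple, hl'chain⟩
        · simp only [List.flatten_cons] at hl'join ⊢
          rw [hl'join, hu, hw', List.take_append_drop]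

theorem cfl_exists (w : List α) (hne : w ≠ []) :
    ∃ l : List (List α), l ≠ [] ∧ (∀ u ∈ l, Lyn' u) ∧ List.Chain' Ple l ∧ l.flatten = w :=
  cfl_exists_aux w.length w (le_refl _) hne

end CFLaux

namespace CFLaux

theorem exists_factor_of_mem {β : Type*} : ∀ {l : List (List β)} {x : List β}, x ∈ l →
    ∃ p q : List β, l.flatten = p ++ x ++ q := by
  intro l
  induction l with
  | nil => intro x hx; simp at hx
  | cons a l ih =>
    intro x hx
    rcases List.mem_cons.mp hx with rfl | hx
    · exact ⟨[], l.flatten, by simp⟩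
    · obtain ⟨p, q, hpq⟩ := ih hx
      exact ⟨a ++ p, q, by simp [hpq, List.append_assoc]⟩

variable {N : ℕ}

theorem toList_eq_nil_iff {u : FreeMonoid (Fin N)} : u.toList = [] ↔ u = 1 :=
  ⟨fun h => FreeMonoid.toList.injective h, fun h => by rw [h]; rfl⟩

theorem lexGt_iff_fdg {u v : FreeMonoid (Fin N)} :
    NC4.LexGt u v ↔ Fdg u.toList v.toList := by
  rw [fdg_iff_exists]
  constructor
  · rintro ⟨r, s, t, i, j, hji, rfl, rfl⟩
    refine ⟨r.toList, i, s.toList, j, t.toList, hji, ?_, ?_⟩ <;>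
      simp [FreeMonoid.toList_mul, FreeMonoid.toList_of, List.append_assoc]
  · rintro ⟨r, a, s, b, t, hlt, hu, hv⟩
    refine ⟨FreeMonoid.ofList r, FreeMonoid.ofList s, FreeMonoid.ofList t, a, b, hlt, ?_, ?_⟩ <;>
      [apply FreeMonoid.toList.injective; apply FreeMonoid.toList.injective] <;>
      simp [FreeMonoid.toList_mul, FreeMonoid.toList_of, FreeMonoid.toList_ofList, hu, hv,
        List.append_assoc]

theorem isLyndon_iff {u : FreeMonoid (Fin N)} : NC4.IsLyndon u ↔ Lyn' u.toList := by
  rw [← lynR_iff]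
  constructor
  · rintro ⟨hne, h⟩
    refine ⟨fun hh => hne (toList_eq_nil_iff.mp hh), ?_⟩
    intro v w hv hw huvw
    have h1 : u = FreeMonoid.ofList v * FreeMonoid.ofList w := by
      apply FreeMonoid.toList.injective
      simp [FreeMonoid.toList_mul, FreeMonoid.toList_ofList, huvw]
    have h2 := h (FreeMonoid.ofList v) (FreeMonoid.ofList w)
      (fun hh => hv (by simpa [toList_eq_nil_iff] using congrArg FreeMonoid.toList hh))
      (fun hh => hw (by simpa [toList_eq_nil_iff] using congrArg FreeMonoid.toList hh)) h1
    have := lexGt_iff_fdg.mp h2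
    simpa [FreeMonoid.toList_mul, FreeMonoid.toList_ofList] using this
  · rintro ⟨hne, h⟩
    refine ⟨fun hh => hne (by rw [hh]; rfl), ?_⟩
    intro v w hv hw huvw
    rw [lexGt_iff_fdg]
    have h1 : u.toList = v.toList ++ w.toList := by
      rw [huvw]; simp [FreeMonoid.toList_mul]
    have h2 := h v.toList w.toList (fun hh => hv (toList_eq_nil_iff.mp hh))
      (fun hh => hw (toList_eq_nil_iff.mp hh)) h1
    simpa [FreeMonoid.toList_mul] using h2

theorem plexLe_iff {u v : FreeMonoid (Fin N)} :
    NC4.PlexLe u v ↔ Ple u.toList v.toList := by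
  constructor
  · rintro (rfl | (⟨w, hw, rfl⟩ | hlex))
    · exact ple_refl _
    · exact Or.inl ⟨w.toList, by simp [FreeMonoid.toList_mul]⟩
    · exact Or.inr (lexGt_iff_fdg.mp hlex)
  · rintro (⟨t, ht⟩ | hfdg)
    · rcases eq_or_ne t [] with rfl | htne
      · left
        apply FreeMonoid.toList.injective
        simpa using ht.symm
      · right; left
        refine ⟨FreeMonoid.ofList t, fun hh => htne ?_, ?_⟩
        · simpa [toList_eq_nil_iff] using congrArg FreeMonoid.toList hh
        · apply FreeMonoid.toList.injective
          simp [FreeMonoid.toList_mul, FreeMonoid.toList_ofList, ← ht]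
    · exact Or.inr (Or.inr (lexGt_iff_fdg.mpr hfdg))

theorem isFactor_iff {u w : FreeMonoid (Fin N)} :
    NC.IsFactor u w ↔ ∃ p q : List (Fin N), w.toList = p ++ u.toList ++ q := by
  constructor
  · rintro ⟨a, b, rfl⟩
    exact ⟨a.toList, b.toList, by simp [FreeMonoid.toList_mul, List.append_assoc]⟩
  · rintro ⟨p, q, h⟩
    refine ⟨FreeMonoid.ofList p, FreeMonoid.ofList q, ?_⟩
    apply FreeMonoid.toList.injective
    simp [FreeMonoid.toList_mul, FreeMonoid.toList_ofList, h, List.append_assoc]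

theorem toList_prod (l : List (FreeMonoid (Fin N))) :
    l.prod.toList = (l.map FreeMonoid.toList).flatten := by
  induction l with
  | nil => rfl
  | cons a l ih => simp [List.prod_cons, FreeMonoid.toList_mul, ih]

end CFLaux



/-- if the obstructions `lw(G)` of the reduced Gröbner basis `G` of a
homogeneous ideal of `k⟨x₁,…,x_N⟩` consist of Lyndon words, then the normal words
modulo `G` are exactly the products `u₁u₂⋯u_s` of `≤_plex`-nondecreasing sequences of
Lyndon words normal modulo `G`, together with the empty word. -/
theorem stmt_6 (k : Type) [Field k] (N : ℕ) [LinearOrder (FreeMonoid (Fin N))]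
    (hadm : NC.IsAdmissible (Fin N)) (e : Fin N → ℕ) (he : ∀ x, 0 < e x)
    (𝔞 : Submodule k (NC.FA k (Fin N))) (hh : NC2.IsHomogIdeal e 𝔞)
    (G : Set (NC.FA k (Fin N))) (hGB : NC.IsGrobner 𝔞 G) (hred : NC.IsReducedGB G)
    (hLyn : ∀ u ∈ NC.lwSet G, NC4.IsLyndon u) :
    NC.nw G =
      {w | ∃ l : List (FreeMonoid (Fin N)), l ≠ [] ∧
        (∀ u ∈ l, u ∈ NC4.LyndonNormal G) ∧ List.Chain' NC4.PlexLe l ∧ l.prod = w} ∪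
      {1} := by
  apply Set.eq_of_subset_of_subset
  · intro w hw
    by_cases h1 : w = 1
    · exact Or.inr h1
    · left
      have hwne : w.toList ≠ [] := fun h => h1 (CFLaux.toList_eq_nil_iff.mp h)
      obtain ⟨l, hlne, hlyn, hchain, hflat⟩ := CFLaux.cfl_exists w.toList hwne
      refine ⟨l.map FreeMonoid.ofList, by simpa using hlne, ?_, ?_, ?_⟩
      · intro u hu
        obtain ⟨x, hx, rfl⟩ := List.mem_map.mp hu
        constructor
        · rw [CFLaux.isLyndon_iff, FreeMonoid.toList_ofList]
          exact hlyn x hx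
        · intro v hv hf
          obtain ⟨p, q, hpq⟩ := CFLaux.isFactor_iff.mp hf
          rw [FreeMonoid.toList_ofList] at hpq
          obtain ⟨p', q', hp'q'⟩ := CFLaux.exists_factor_of_mem hx
          refine hw v hv (CFLaux.isFactor_iff.mpr ⟨p' ++ p, q ++ q', ?_⟩)
          rw [hflat] at hp'q'
          rw [hp'q', hpq]
          simp [List.append_assoc]
      · refine (List.isChain_map _).2 ?_
        refine hchain.imp ?_
        intro a b hab
        rw [CFLaux.plexLe_iff, FreeMonoid.toList_ofList, FreeMonoid.toList_ofList]
        exact hab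
      · apply FreeMonoid.toList.injective
        rw [CFLaux.toList_prod]
        simp only [List.map_map]
        have : (FreeMonoid.toList ∘ FreeMonoid.ofList : List (Fin N) → List (Fin N)) = id := by
          funext x; simp [FreeMonoid.toList_ofList]
        rw [this]
        simpa using hflat
  · intro w hw
    rcases hw with ⟨l, hlne, hmem, hchain, hprod⟩ | h1
    · intro v hv hf
      have hvl : CFLaux.Lyn' v.toList := CFLaux.isLyndon_iff.mp (hLyn v hv)
      obtain ⟨p, q, hpq⟩ := CFLaux.isFactor_iff.mp hf
      have hflat : (l.map FreeMonoid.toList).flatten = p ++ v.toList ++ q := by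
        rw [← CFLaux.toList_prod, hprod]; exact hpq
      have hchain' : List.Chain' CFLaux.Ple (l.map FreeMonoid.toList) := by
        refine (List.isChain_map _).2 ?_
        exact hchain.imp (fun a b hab => CFLaux.plexLe_iff.mp hab)
      have hlyn' : ∀ x ∈ l.map FreeMonoid.toList, CFLaux.Lyn' x := by
        intro x hx
        obtain ⟨u, hu, rfl⟩ := List.mem_map.mp hx
        exact CFLaux.isLyndon_iff.mp (hmem u hu).1
      obtain ⟨x, hx, p', q', hxeq⟩ :=
        CFLaux.factor_lemma (l.map FreeMonoid.toList) hchain' hlyn' v.toList p q hvl hflat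
      obtain ⟨u, hu, rfl⟩ := List.mem_map.mp hx
      exact (hmem u hu).2 v hv (CFLaux.isFactor_iff.mpr ⟨p', q', hxeq⟩)
    · have hw1 : w = 1 := h1
      subst hw1
      intro v hv hf
      obtain ⟨p, q, hpq⟩ := CFLaux.isFactor_iff.mp hf
      have : v.toList = [] := by
        have := hpq.symm
        rw [FreeMonoid.toList_one] at this
        rcases List.append_eq_nil_iff.mp this with ⟨h2, _⟩
        exact (List.append_eq_nil_iff.mp h2).2
      exact (hLyn v hv).1 (CFLaux.toList_eq_nil_iff.mp this)
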